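/- Let δ be a real number with 0 < δ ≤ 1/5 and let C ⊆ V be a δ-clean set with B ⊆ C and |C| > (1/δ)·|B|. Then the number of negative edges both of whose endpoints lie in C \ B is at most 2·m(OPT_B). -/

import Mathlib

open scoped Classical

/-- A signed graph: a finite vertex set with disjoint sets of positive and
negative edges (unordered pairs of distinct vertices). -/
structure SignedGraph (V : Type*) [Fintype V] [DecidableEq V] where
  pos : Finset (Sym2 V)
  neg : Finset (Sym2 V)
  pos_not_diag : ∀ e ∈ pos, ¬ e.IsDiag
  neg_not_diag : ∀ e ∈ neg, ¬ e.IsDiag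
  disjoint_pos_neg : Disjoint pos neg

namespace SignedGraph

variable {V : Type*} [Fintype V] [DecidableEq V]

def posAdj (G : SignedGraph V) (u v : V) : Prop := s(u, v) ∈ G.pos

def negAdj (G : SignedGraph V) (u v : V) : Prop := s(u, v) ∈ G.neg

/-- Positive neighbourhood `N⁺(v)`. -/
noncomputable def posNbr (G : SignedGraph V) (v : V) : Finset V :=
  Finset.univ.filter (fun u => G.posAdj v u)

/-- Negative neighbourhood `N⁻(v)`. -/
noncomputable def negNbr (G : SignedGraph V) (v : V) : Finset V :=
  Finset.univ.filter (fun u => G.negAdj v u)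

/-- Closed positive neighbourhood `N⁺[v] = N⁺(v) ∪ {v}`. -/
noncomputable def posNbrCl (G : SignedGraph V) (v : V) : Finset V :=
  insert v (G.posNbr v)

/-- `N⁺(B)`: the set of good vertices having a positive edge to some bad vertex. -/
noncomputable def posNbrSet (G : SignedGraph V) (B : Finset V) : Finset V :=
  Finset.univ.filter (fun v => v ∉ B ∧ ∃ u ∈ B, G.posAdj v u)

/-- `E⁺(X, Y)`: positive edges with one endpoint in `X` and the other in `Y`. -/
noncomputable def Eplus (G : SignedGraph V) (X Y : Finset V) : Finset (Sym2 V) :=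
  G.pos.filter (fun e => ∃ u ∈ X, ∃ v ∈ Y, e = s(u, v))

/-- `E⁻(X, Y)`: negative edges with one endpoint in `X` and the other in `Y`. -/
noncomputable def Eminus (G : SignedGraph V) (X Y : Finset V) : Finset (Sym2 V) :=
  G.neg.filter (fun e => ∃ u ∈ X, ∃ v ∈ Y, e = s(u, v))

/-- A clustering of `V`: a partition of `V` into nonempty parts. -/
def IsClustering (P : Finset (Finset V)) : Prop :=
  (∀ C ∈ P, C.Nonempty) ∧
  (∀ C ∈ P, ∀ C' ∈ P, C ≠ C' → Disjoint C C') ∧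
  ∀ v : V, ∃ C ∈ P, v ∈ C

/-- `u` and `v` lie in the same cluster of `P`. -/
def SameCluster (P : Finset (Finset V)) (u v : V) : Prop :=
  ∃ C ∈ P, u ∈ C ∧ v ∈ C

/-- `m(𝒞)`: number of mistakes of a clustering: negative edges within a
cluster plus positive edges between clusters. -/
noncomputable def mistakes (G : SignedGraph V) (P : Finset (Finset V)) : ℕ :=
  (G.neg.filter (fun e => ∃ u v : V, e = s(u, v) ∧ SameCluster P u v)).card +
  (G.pos.filter (fun e => ∃ u v : V, e = s(u, v) ∧ ¬ SameCluster P u v)).card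

/-- `m(OPT_B)`: minimum number of mistakes over clusterings in which `B` is
contained in a single cluster. -/
noncomputable def mOptB (G : SignedGraph V) (B : Finset V) : ℕ :=
  sInf {m : ℕ | ∃ P : Finset (Finset V),
    IsClustering P ∧ (∃ C ∈ P, B ⊆ C) ∧ m = G.mistakes P}

/-- A good vertex `v` is `δ`-good w.r.t. `C`. -/
def deltaGood (G : SignedGraph V) (δ : ℝ) (v : V) (C : Finset V) : Prop :=
  ((G.negNbr v ∩ C).card : ℝ) ≤ δ * C.card ∧
  ((G.posNbr v \ C).card : ℝ) ≤ δ * C.card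

/-- The set `B` of bad vertices is `δ`-good w.r.t. `C ⊇ B`. -/
def deltaGoodB (G : SignedGraph V) (δ : ℝ) (B C : Finset V) : Prop :=
  ((G.Eminus B (C \ B)).card : ℝ) ≤ δ * B.card * C.card ∧
  ((G.Eplus B Cᶜ).card : ℝ) ≤ δ * B.card * C.card

/-- `C` is `δ`-clean (w.r.t. the set `B` of bad vertices): every good vertex of
`C` is `δ`-good w.r.t. `C`, and if `B ⊆ C` then `B` is `δ`-good w.r.t. `C`. -/
def deltaClean (G : SignedGraph V) (δ : ℝ) (B C : Finset V) : Prop :=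
  (∀ v ∈ C, v ∉ B → G.deltaGood δ v C) ∧ (B ⊆ C → G.deltaGoodB δ B C)

/-- The structural assumptions on the signed graph w.r.t. the set `B` of bad
vertices: every pair of distinct good vertices is a positive or negative edge,
every pair of distinct bad vertices is a positive edge, and for each good
vertex the edges joining it to `B` are all positive or all negative. -/
def GoodBadStructure (G : SignedGraph V) (B : Finset V) : Prop :=
  (∀ u v : V, u ∉ B → v ∉ B → u ≠ v → G.posAdj u v ∨ G.negAdj u v) ∧
  (∀ u v : V, u ∈ B → v ∈ B → u ≠ v → G.posAdj u v) ∧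
  (∀ v : V, v ∉ B → (∀ u ∈ B, ¬ G.negAdj v u) ∨ (∀ u ∈ B, ¬ G.posAdj v u))

end SignedGraph

namespace Stmt0Proof

open Finset

variable {V : Type*} [Fintype V] [DecidableEq V]

private lemma double_count (S : Finset (Sym2 V)) (hdiag : ∀ e ∈ S, ¬ e.IsDiag)
    (q : Sym2 V → Prop) (r : V → V → Prop)
    (instq : DecidablePred q) (instr : ∀ v, DecidablePred (r v))
    (hsymm : ∀ u v, r u v → r v u)
    (hr : ∀ u v, r u v ↔ (s(u,v) ∈ S ∧ q s(u,v))) :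
    ∑ v : V, (@Finset.filter V (fun w => r v w) (instr v) Finset.univ).card
      = 2 * (@Finset.filter _ q instq S).card := by
  classical
  let H : SimpleGraph V :=
    { Adj := r
      symm := ⟨fun u v h => hsymm u v h⟩
      loopless := ⟨fun u h => hdiag _ ((hr u u).1 h).1 (by simp)⟩ }
  have hdeg : ∀ v, (@Finset.filter V (fun w => r v w) (instr v) Finset.univ).card
      = H.degree v := by
    intro v
    unfold SimpleGraph.degree
    congr 1
    ext w
    simp only [SimpleGraph.mem_neighborFinset, Finset.mem_filter, Finset.mem_univ, true_and]
    exact Iff.rfl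
  have hedge : H.edgeFinset = S.filter q := by
    ext e
    induction e using Sym2.ind with
    | _ u v =>
      simp only [SimpleGraph.mem_edgeFinset, SimpleGraph.mem_edgeSet, Finset.mem_filter]
      exact hr u v
  have hfq : @Finset.filter _ q instq S = S.filter q := by
    ext e; simp only [Finset.mem_filter]
  calc ∑ v : V, (@Finset.filter V (fun w => r v w) (instr v) Finset.univ).card
      = ∑ v : V, H.degree v := by simp only [hdeg]
    _ = 2 * H.edgeFinset.card := SimpleGraph.sum_degrees_eq_twice_card_edges H
    _ = _ := by rw [hedge, hfq]

private lemma sameCluster_symm {P : Finset (Finset V)} {u v : V}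
    (h : SignedGraph.SameCluster P u v) : SignedGraph.SameCluster P v u := by
  obtain ⟨D, h1, h2, h3⟩ := h; exact ⟨D, h1, h3, h2⟩

private noncomputable def dAll (G : SignedGraph V) (A : Finset V) (v : V) : ℕ :=
  (univ.filter fun w => G.negAdj v w ∧ v ∈ A ∧ w ∈ A).card

private noncomputable def dI (G : SignedGraph V) (P : Finset (Finset V)) (A : Finset V)
    (v : V) : ℕ :=
  (univ.filter fun w => (G.negAdj v w ∧ v ∈ A ∧ w ∈ A) ∧ SignedGraph.SameCluster P v w).card

private noncomputable def dC (G : SignedGraph V) (P : Finset (Finset V)) (A : Finset V)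
    (v : V) : ℕ :=
  (univ.filter fun w => (G.negAdj v w ∧ v ∈ A ∧ w ∈ A) ∧ ¬ SignedGraph.SameCluster P v w).card

private noncomputable def pC (G : SignedGraph V) (P : Finset (Finset V)) (A : Finset V)
    (v : V) : ℕ :=
  (univ.filter fun w => (G.posAdj v w ∧ v ∈ A ∧ w ∈ A) ∧ ¬ SignedGraph.SameCluster P v w).card

set_option maxHeartbeats 1000000 in
private lemma key (G : SignedGraph V)
    (B : Finset V) (hGB : G.GoodBadStructure B)
    (δ : ℝ) (hδ0 : 0 < δ) (hδ5 : δ ≤ 1 / 5)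
    (C : Finset V) (hBC : B ⊆ C) (hclean : G.deltaClean δ B C)
    (hsize : (1 / δ) * (B.card : ℝ) < (C.card : ℝ))
    (P : Finset (Finset V)) (hP : SignedGraph.IsClustering P) :
    ((G.neg.filter (fun e => ∀ x ∈ e, x ∈ C \ B)).card : ℝ) ≤ 2 * (G.mistakes P : ℝ) := by
  classical
  obtain ⟨hPne, hPdisj, hPcov⟩ := hP
  set A : Finset V := C \ B with hA
  have hAC : A ⊆ C := Finset.sdiff_subset
  have hAB : ∀ v ∈ A, v ∉ B := fun v hv => (Finset.mem_sdiff.mp hv).2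
  have hAC' : ∀ v ∈ A, v ∈ C := fun v hv => (Finset.mem_sdiff.mp hv).1
  have hn0 : (0:ℝ) < (C.card : ℝ) := lt_of_le_of_lt (by positivity) hsize
  have hbδ : (B.card : ℝ) < δ * C.card := by
    have h := mul_lt_mul_of_pos_left hsize hδ0
    have h2 : δ * ((1/δ) * (B.card:ℝ)) = B.card := by field_simp
    linarith
  have haR : ((A.card : ℝ)) = (C.card:ℝ) - B.card := by
    rw [hA, Finset.card_sdiff_of_subset hBC, Nat.cast_sub (Finset.card_le_card hBC)]
  -- the cluster function
  have hkex : ∀ v : V, ∃ D, D ∈ P ∧ v ∈ D := by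
    intro v; obtain ⟨D, hD, hvD⟩ := hPcov v; exact ⟨D, hD, hvD⟩
  set k : V → Finset V := fun v => (hkex v).choose with hk
  have hkP : ∀ v, k v ∈ P := fun v => (hkex v).choose_spec.1
  have hkmem : ∀ v, v ∈ k v := fun v => (hkex v).choose_spec.2
  have hkuniq : ∀ (v : V) (D : Finset V), D ∈ P → v ∈ D → D = k v := by
    intro v D hD hvD
    by_contra hne
    exact (Finset.disjoint_left.mp (hPdisj D hD (k v) (hkP v) hne)) hvD (hkmem v)
  have hR : ∀ u v, SignedGraph.SameCluster P u v ↔ v ∈ k u := by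
    intro u v
    constructor
    · rintro ⟨D, hD, huD, hvD⟩
      rwa [hkuniq u D hD huD] at hvD
    · intro h
      exact ⟨k u, hkP u, hkmem u, h⟩
  have hnegsymm : ∀ u v : V, G.negAdj u v → G.negAdj v u := by
    intro u v h; unfold SignedGraph.negAdj at *; rwa [Sym2.eq_swap]
  have hpossymm : ∀ u v : V, G.posAdj u v → G.posAdj v u := by
    intro u v h; unfold SignedGraph.posAdj at *; rwa [Sym2.eq_swap]
  set xv : V → ℕ := fun v => (k v ∩ A).card with hxv
  -- double counts
  have hrAll : ∀ u v : V, (G.negAdj u v ∧ u ∈ A ∧ v ∈ A) ↔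
      (s(u,v) ∈ G.neg ∧ ∀ x ∈ (s(u,v) : Sym2 V), x ∈ A) := by
    intro u v
    constructor
    · rintro ⟨h1, h2, h3⟩
      refine ⟨h1, fun x hx => ?_⟩
      rcases Sym2.mem_iff.mp hx with rfl | rfl
      exacts [h2, h3]
    · rintro ⟨h1, h2⟩
      exact ⟨h1, h2 u (by simp), h2 v (by simp)⟩
  have hDall : ∑ v : V, dAll G A v = 2 * (G.neg.filter fun e => ∀ x ∈ e, x ∈ A).card := by
    exact double_count (V := V) G.neg G.neg_not_diag
      (fun e => ∀ x ∈ e, x ∈ A)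
      (fun u v => G.negAdj u v ∧ u ∈ A ∧ v ∈ A) _ _
      (fun u v h => ⟨hnegsymm u v h.1, h.2.2, h.2.1⟩) hrAll
  have hDI : ∑ v : V, dI G P A v = 2 * (G.neg.filter fun e =>
      (∀ x ∈ e, x ∈ A) ∧ ∃ a b, e = s(a,b) ∧ SignedGraph.SameCluster P a b).card := by
    have hsym : ∀ u v : V, ((G.negAdj u v ∧ u ∈ A ∧ v ∈ A) ∧ SignedGraph.SameCluster P u v) →
        ((G.negAdj v u ∧ v ∈ A ∧ u ∈ A) ∧ SignedGraph.SameCluster P v u) := by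
      rintro u v ⟨⟨h1, h2, h3⟩, h4⟩
      exact ⟨⟨hnegsymm u v h1, h3, h2⟩, sameCluster_symm h4⟩
    have hiff : ∀ u v : V, ((G.negAdj u v ∧ u ∈ A ∧ v ∈ A) ∧ SignedGraph.SameCluster P u v) ↔
        (s(u,v) ∈ G.neg ∧ ((∀ x ∈ (s(u,v) : Sym2 V), x ∈ A) ∧
          ∃ a b, (s(u,v) : Sym2 V) = s(a,b) ∧ SignedGraph.SameCluster P a b)) := by
      intro u v
      constructor
      · rintro ⟨hall, h4⟩
        obtain ⟨h1, h2⟩ := (hrAll u v).mp hall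
        exact ⟨h1, h2, u, v, rfl, h4⟩
      · rintro ⟨h1, h2, a, b, he, h4⟩
        refine ⟨(hrAll u v).mpr ⟨h1, h2⟩, ?_⟩
        rcases Sym2.eq_iff.mp he with ⟨rfl, rfl⟩ | ⟨rfl, rfl⟩
        · exact h4
        · exact sameCluster_symm h4
    exact double_count (V := V) G.neg G.neg_not_diag
      (fun e => (∀ x ∈ e, x ∈ A) ∧ ∃ a b, e = s(a,b) ∧ SignedGraph.SameCluster P a b)
      (fun u v => (G.negAdj u v ∧ u ∈ A ∧ v ∈ A) ∧ SignedGraph.SameCluster P u v) _ _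
      hsym hiff
  have hPC : ∑ v : V, pC G P A v = 2 * (G.pos.filter fun e =>
      (∀ x ∈ e, x ∈ A) ∧ ∃ a b, e = s(a,b) ∧ ¬ SignedGraph.SameCluster P a b).card := by
    have hsym : ∀ u v : V, ((G.posAdj u v ∧ u ∈ A ∧ v ∈ A) ∧ ¬ SignedGraph.SameCluster P u v) →
        ((G.posAdj v u ∧ v ∈ A ∧ u ∈ A) ∧ ¬ SignedGraph.SameCluster P v u) := by
      rintro u v ⟨⟨h1, h2, h3⟩, h4⟩
      exact ⟨⟨hpossymm u v h1, h3, h2⟩, fun hc => h4 (sameCluster_symm hc)⟩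
    have hiff : ∀ u v : V, ((G.posAdj u v ∧ u ∈ A ∧ v ∈ A) ∧ ¬ SignedGraph.SameCluster P u v) ↔
        (s(u,v) ∈ G.pos ∧ ((∀ x ∈ (s(u,v) : Sym2 V), x ∈ A) ∧
          ∃ a b, (s(u,v) : Sym2 V) = s(a,b) ∧ ¬ SignedGraph.SameCluster P a b)) := by
      intro u v
      constructor
      · rintro ⟨⟨h1, h2, h3⟩, h4⟩
        refine ⟨h1, fun x hx => ?_, u, v, rfl, h4⟩
        rcases Sym2.mem_iff.mp hx with rfl | rfl
        exacts [h2, h3]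
      · rintro ⟨h1, h2, a, b, he, h4⟩
        refine ⟨⟨h1, h2 u (by simp), h2 v (by simp)⟩, ?_⟩
        rcases Sym2.eq_iff.mp he with ⟨rfl, rfl⟩ | ⟨rfl, rfl⟩
        · exact h4
        · exact fun hc => h4 (sameCluster_symm hc)
    exact double_count (V := V) G.pos G.pos_not_diag
      (fun e => (∀ x ∈ e, x ∈ A) ∧ ∃ a b, e = s(a,b) ∧ ¬ SignedGraph.SameCluster P a b)
      (fun u v => (G.posAdj u v ∧ u ∈ A ∧ v ∈ A) ∧ ¬ SignedGraph.SameCluster P u v) _ _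
      hsym hiff
  -- restrict sums to A
  have hrestr : ∀ f : V → ℕ, (∀ v, v ∉ A → f v = 0) → ∑ v ∈ A, f v = ∑ v : V, f v := by
    intro f hf
    apply Finset.sum_subset (Finset.subset_univ A)
    exact fun v _ hv => hf v hv
  have hDallA : ∑ v ∈ A, dAll G A v = ∑ v : V, dAll G A v := by
    refine hrestr _ (fun v hv => ?_)
    unfold dAll
    rw [Finset.card_eq_zero, Finset.filter_eq_empty_iff]
    exact fun w _ hw => hv hw.2.1
  have hDIA : ∑ v ∈ A, dI G P A v = ∑ v : V, dI G P A v := by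
    refine hrestr _ (fun v hv => ?_)
    unfold dI
    rw [Finset.card_eq_zero, Finset.filter_eq_empty_iff]
    exact fun w _ hw => hv hw.1.2.1
  have hPCA : ∑ v ∈ A, pC G P A v = ∑ v : V, pC G P A v := by
    refine hrestr _ (fun v hv => ?_)
    unfold pC
    rw [Finset.card_eq_zero, Finset.filter_eq_empty_iff]
    exact fun w _ hw => hv hw.1.2.1
  -- mistakes lower bound
  have hmist : ∑ v ∈ A, dI G P A v + ∑ v ∈ A, pC G P A v ≤ 2 * G.mistakes P := by
    rw [hDIA, hPCA, hDI, hPC]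
    unfold SignedGraph.mistakes
    have s1 : (G.neg.filter fun e =>
        (∀ x ∈ e, x ∈ A) ∧ ∃ a b, e = s(a,b) ∧ SignedGraph.SameCluster P a b).card
        ≤ (G.neg.filter (fun e => ∃ u v : V, e = s(u, v) ∧ SignedGraph.SameCluster P u v)).card := by
      refine Finset.card_le_card (fun e he => ?_)
      rw [Finset.mem_filter] at he ⊢
      exact ⟨he.1, he.2.2⟩
    have s2 : (G.pos.filter fun e =>
        (∀ x ∈ e, x ∈ A) ∧ ∃ a b, e = s(a,b) ∧ ¬ SignedGraph.SameCluster P a b).card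
        ≤ (G.pos.filter (fun e => ∃ u v : V, e = s(u, v) ∧ ¬ SignedGraph.SameCluster P u v)).card := by
      refine Finset.card_le_card (fun e he => ?_)
      rw [Finset.mem_filter] at he ⊢
      exact ⟨he.1, he.2.2⟩
    omega
  -- split dAll
  have hsplit : ∀ v, dAll G A v = dI G P A v + dC G P A v := by
    intro v
    unfold dAll dI dC
    rw [Finset.card_filter, Finset.card_filter, Finset.card_filter, ← Finset.sum_add_distrib]
    apply Finset.sum_congr rfl
    intro w _
    by_cases h1 : (G.negAdj v w ∧ v ∈ A ∧ w ∈ A) <;>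
      by_cases h2 : SignedGraph.SameCluster P v w <;> simp [h1, h2]
  -- per-vertex degree bound
  have hdCδ : ∀ v ∈ A, (dC G P A v : ℝ) ≤ δ * C.card := by
    intro v hv
    have hle : dC G P A v ≤ (G.negNbr v ∩ C).card := by
      unfold dC
      refine Finset.card_le_card (fun w hw => ?_)
      obtain ⟨-, ⟨h1, -, h3⟩, -⟩ := Finset.mem_filter.mp hw
      exact Finset.mem_inter.mpr ⟨Finset.mem_filter.mpr ⟨Finset.mem_univ w, h1⟩, hAC h3⟩
    calc (dC G P A v : ℝ) ≤ ((G.negNbr v ∩ C).card : ℝ) := by exact_mod_cast hle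
      _ ≤ δ * C.card := (hclean.1 v (hAC' v hv) (hAB v hv)).1
  -- positive cross lower bound
  have hpCv : ∀ v ∈ A, ((A.card : ℝ) - (xv v : ℝ)) - dC G P A v ≤ pC G P A v := by
    intro v hv
    have h1 : (A \ k v).card ≤ pC G P A v + dC G P A v := by
      unfold pC dC
      refine le_trans (Finset.card_le_card (fun w hw => ?_)) (Finset.card_union_le _ _)
      obtain ⟨hwA, hwk⟩ := Finset.mem_sdiff.mp hw
      have hne : v ≠ w := fun h => hwk (h ▸ hkmem v)
      have hnR : ¬ SignedGraph.SameCluster P v w := fun h => hwk ((hR v w).mp h)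
      rcases hGB.1 v w (hAB v hv) (hAB w hwA) hne with hp | hn
      · exact Finset.mem_union_left _
          (Finset.mem_filter.mpr ⟨Finset.mem_univ w, ⟨hp, hv, hwA⟩, hnR⟩)
      · exact Finset.mem_union_right _
          (Finset.mem_filter.mpr ⟨Finset.mem_univ w, ⟨hn, hv, hwA⟩, hnR⟩)
    have hkA : A \ k v = A \ (k v ∩ A) := by
      ext w; simp only [Finset.mem_sdiff, Finset.mem_inter]; tauto
    have h2 : (A \ k v).card = A.card - xv v := by
      rw [hkA, Finset.card_sdiff_of_subset Finset.inter_subset_right]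
    have h3 : xv v ≤ A.card := Finset.card_le_card Finset.inter_subset_right
    have h4 : ((A.card : ℝ) - (xv v : ℝ)) ≤ (pC G P A v : ℝ) + dC G P A v := by
      rw [← Nat.cast_sub h3]
      exact_mod_cast h2 ▸ h1
    linarith
  -- main inequality
  have hxva : ∀ v, (xv v : ℝ) ≤ A.card := fun v => by
    exact_mod_cast Finset.card_le_card (Finset.inter_subset_right : k v ∩ A ⊆ A)
  have hmain : 3 * ∑ v ∈ A, (dC G P A v : ℝ) ≤ 2 * ∑ v ∈ A, ((A.card : ℝ) - xv v) := by
    by_cases hcase : ∀ v ∈ A, (3/2) * (δ * C.card) ≤ (A.card : ℝ) - xv v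
    · rw [Finset.mul_sum, Finset.mul_sum]
      apply Finset.sum_le_sum
      intro v hv
      have := hdCδ v hv
      have := hcase v hv
      linarith
    · push_neg at hcase
      obtain ⟨w, hwA, hw⟩ := hcase
      set X : Finset V := k w ∩ A with hX
      have hXA : X ⊆ A := Finset.inter_subset_right
      have hx1a : X.card ≤ A.card := Finset.card_le_card hXA
      have hcardAX : ((A \ X).card : ℝ) = (A.card : ℝ) - X.card := by
        rw [Finset.card_sdiff_of_subset hXA, Nat.cast_sub hx1a]
      have hδn5 : δ * C.card ≤ (C.card : ℝ) / 5 := by nlinarith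
      have hbig : (C.card : ℝ) / 2 < X.card := by
        have hxw : (xv w : ℝ) = X.card := by rw [hxv]
        linarith
      have h3δ : 3 * (δ * C.card) ≤ 2 * (X.card : ℝ) := by linarith
      have hxvX : ∀ v ∈ X, xv v = X.card := by
        intro v hv
        have hvk : v ∈ k w := (Finset.mem_inter.mp hv).1
        have hkk : k w = k v := hkuniq v (k w) (hkP w) hvk
        show (k v ∩ A).card = X.card
        rw [hX, hkk]
      have hxvout : ∀ v ∈ A \ X, (X.card : ℝ) ≤ (A.card : ℝ) - xv v := by
        intro v hv
        obtain ⟨hvA, hvX⟩ := Finset.mem_sdiff.mp hv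
        have hsub : k v ∩ A ⊆ A \ X := by
          intro u hu
          obtain ⟨huk, huA⟩ := Finset.mem_inter.mp hu
          refine Finset.mem_sdiff.mpr ⟨huA, fun huX => ?_⟩
          obtain ⟨hukw, -⟩ := Finset.mem_inter.mp huX
          have e1 : k w = k u := hkuniq u (k w) (hkP w) hukw
          have e2 : k v = k u := hkuniq u (k v) (hkP v) huk
          exact hvX (Finset.mem_inter.mpr ⟨(e1.trans e2.symm) ▸ hkmem v, hvA⟩)
        have hle : (xv v : ℝ) ≤ ((A \ X).card : ℝ) := by
          exact_mod_cast Finset.card_le_card hsub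
        rw [hcardAX] at hle
        linarith
      have hSX : 2 * (X.card : ℝ) * ((A.card : ℝ) - X.card)
          ≤ ∑ v ∈ A, ((A.card : ℝ) - xv v) := by
        rw [← Finset.sum_sdiff hXA]
        have e1 : ∑ v ∈ X, ((A.card : ℝ) - xv v) = X.card * ((A.card : ℝ) - X.card) := by
          rw [Finset.sum_congr rfl (fun v hv => by rw [hxvX v hv]), Finset.sum_const,
            nsmul_eq_mul]
        have e2 : ((A \ X).card : ℝ) * (X.card : ℝ) ≤ ∑ v ∈ A \ X, ((A.card : ℝ) - xv v) := by
          have h := Finset.card_nsmul_le_sum (A \ X) (fun v => (A.card : ℝ) - xv v)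
            (X.card : ℝ) hxvout
          rwa [nsmul_eq_mul] at h
        rw [hcardAX] at e2
        nlinarith [e1, e2]
      -- swap bound
      have hswapN : ∑ v ∈ X, dC G P A v ≤ ∑ v ∈ A \ X, dC G P A v := by
        have hXfilter : ∀ v ∈ X, dC G P A v
            = ∑ u ∈ A \ X, (if (G.negAdj v u ∧ v ∈ A ∧ u ∈ A) ∧
                ¬ SignedGraph.SameCluster P v u then 1 else 0) := by
          intro v hv
          unfold dC
          rw [Finset.card_filter]
          symm
          apply Finset.sum_subset (Finset.subset_univ (A \ X))
          intro u _ hu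
          rw [if_neg]
          rintro ⟨⟨-, -, huA⟩, hnR⟩
          refine hu (Finset.mem_sdiff.mpr ⟨huA, fun huX => ?_⟩)
          exact hnR ⟨k w, hkP w, (Finset.mem_inter.mp hv).1, (Finset.mem_inter.mp huX).1⟩
        calc ∑ v ∈ X, dC G P A v
            = ∑ v ∈ X, ∑ u ∈ A \ X, (if (G.negAdj v u ∧ v ∈ A ∧ u ∈ A) ∧
                ¬ SignedGraph.SameCluster P v u then 1 else 0) :=
              Finset.sum_congr rfl hXfilter
          _ = ∑ u ∈ A \ X, ∑ v ∈ X, (if (G.negAdj v u ∧ v ∈ A ∧ u ∈ A) ∧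
                ¬ SignedGraph.SameCluster P v u then 1 else 0) := Finset.sum_comm
          _ ≤ ∑ u ∈ A \ X, dC G P A u := by
              apply Finset.sum_le_sum
              intro u hu
              rw [← Finset.card_filter]
              unfold dC
              refine Finset.card_le_card (fun v hv => ?_)
              obtain ⟨hvX, ⟨h1, h2, h3⟩, h4⟩ := Finset.mem_filter.mp hv
              exact Finset.mem_filter.mpr ⟨Finset.mem_univ v, ⟨hnegsymm v u h1, h3, h2⟩,
                fun hc => h4 (sameCluster_symm hc)⟩
      have hswap : ∑ v ∈ A, (dC G P A v : ℝ) ≤ 2 * ∑ v ∈ A \ X, (dC G P A v : ℝ) := by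
        have e0 : ∑ v ∈ A \ X, (dC G P A v : ℝ) + ∑ v ∈ X, (dC G P A v : ℝ)
            = ∑ v ∈ A, (dC G P A v : ℝ) := Finset.sum_sdiff hXA
        have e1 : ∑ v ∈ X, (dC G P A v : ℝ) ≤ ∑ v ∈ A \ X, (dC G P A v : ℝ) := by
          exact_mod_cast hswapN
        linarith
      have hout : ∑ v ∈ A \ X, (dC G P A v : ℝ) ≤ ((A.card : ℝ) - X.card) * (δ * C.card) := by
        have h := Finset.sum_le_card_nsmul (A \ X) (fun v => (dC G P A v : ℝ)) (δ * C.card)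
          (fun v hv => hdCδ v (Finset.mem_sdiff.mp hv).1)
        rw [nsmul_eq_mul, hcardAX] at h
        exact h
      have hax : (0:ℝ) ≤ (A.card : ℝ) - X.card := by
        have hc : (X.card:ℝ) ≤ (A.card:ℝ) := Nat.cast_le.mpr hx1a
        linarith
      nlinarith [mul_le_mul_of_nonneg_left h3δ hax]
  -- assemble
  have h2T : 2 * (G.neg.filter fun e => ∀ x ∈ e, x ∈ A).card
      = ∑ v ∈ A, dI G P A v + ∑ v ∈ A, dC G P A v := by
    rw [← hDall, ← hDallA, ← Finset.sum_add_distrib]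
    exact Finset.sum_congr rfl (fun v _ => hsplit v)
  have hSP : ∑ v ∈ A, ((A.card : ℝ) - xv v) - ∑ v ∈ A, (dC G P A v : ℝ)
      ≤ ∑ v ∈ A, (pC G P A v : ℝ) := by
    rw [← Finset.sum_sub_distrib]
    exact Finset.sum_le_sum hpCv
  have hT : 2 * ((G.neg.filter fun e => ∀ x ∈ e, x ∈ A).card : ℝ)
      = ∑ v ∈ A, (dI G P A v : ℝ) + ∑ v ∈ A, (dC G P A v : ℝ) := by
    exact_mod_cast congrArg (Nat.cast (R := ℝ)) h2T
  have hMr : ∑ v ∈ A, (dI G P A v : ℝ) + ∑ v ∈ A, (pC G P A v : ℝ)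
      ≤ 2 * (G.mistakes P : ℝ) := by
    exact_mod_cast hmist
  have hSInn : (0:ℝ) ≤ ∑ v ∈ A, (dI G P A v : ℝ) := by positivity
  linarith

end Stmt0Proof


/-- If `C ⊇ B` is `δ`-clean with `0 < δ ≤ 1/5` and
`|C| > (1/δ)·|B|`, then the number of negative edges with both endpoints in
`C \ B` is at most `2·m(OPT_B)`. -/
theorem stmt0 {V : Type*} [Fintype V] [DecidableEq V] (G : SignedGraph V)
    (B : Finset V) (hGB : G.GoodBadStructure B)
    (δ : ℝ) (hδ0 : 0 < δ) (hδ5 : δ ≤ 1 / 5)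
    (C : Finset V) (hBC : B ⊆ C) (hclean : G.deltaClean δ B C)
    (hsize : (1 / δ) * (B.card : ℝ) < (C.card : ℝ)) :
    ((G.neg.filter (fun e => ∀ x ∈ e, x ∈ C \ B)).card : ℝ) ≤ 2 * G.mOptB B := by
  classical
  by_cases hV : Nonempty V
  · have hne : {m : ℕ | ∃ P : Finset (Finset V),
        SignedGraph.IsClustering P ∧ (∃ D ∈ P, B ⊆ D) ∧ m = G.mistakes P}.Nonempty := by
      refine ⟨G.mistakes {Finset.univ}, {Finset.univ}, ⟨?_, ?_, ?_⟩, ⟨Finset.univ, ?_, ?_⟩, rfl⟩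
      · intro D hD
        rw [Finset.mem_singleton] at hD
        subst hD
        exact Finset.univ_nonempty
      · intro D hD D' hD' hne
        rw [Finset.mem_singleton] at hD hD'
        exact absurd (hD.trans hD'.symm) hne
      · intro v
        exact ⟨Finset.univ, Finset.mem_singleton_self _, Finset.mem_univ v⟩
      · exact Finset.mem_singleton_self _
      · exact Finset.subset_univ B
    have hmem := Nat.sInf_mem hne
    obtain ⟨P, hP, -, hm⟩ := hmem
    have hkey := Stmt0Proof.key G B hGB δ hδ0 hδ5 C hBC hclean hsize P hP
    rw [SignedGraph.mOptB, hm]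
    exact hkey
  · have hempty : IsEmpty V := not_nonempty_iff.mp hV
    have hne : G.neg = ∅ := by
      ext e
      simp only [Finset.notMem_empty, iff_false]
      intro he
      exact Sym2.ind (fun u v => (hempty.false u).elim) e
    rw [hne]
    simp only [Finset.filter_empty, Finset.card_empty, Nat.cast_zero]
    positivity
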